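/- Let x be a stable g-matching, w ∈ W, and let (c, a) and (c', a') be disjoint essential w-pairs under x. Put z := x_w + 1^a − 1^c, z' := x_w + 1^{a'} − 1^{c'}, and y := x_w + 1^a − 1^c + 1^{a'} − 1^{c'}. Then: (i) y is acceptable for C_w (so both z + 1^{a'} − 1^{c'} and z' + 1^a − 1^c are acceptable); (ii) no edge d ∈ U_F^+(x) ∩ E_w is interesting for w under y; and (iii) the pair (c', a') remains essential under z and the pair (c, a) remains essential under z' (i.e., the corresponding shifted vectors are acceptable and no edge of U_F^+(x) ∩ E_w other than the pair's positive edge is interesting for w under them). -/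
import Mathlib


namespace SGMMStmt

/-- Data of the stable g-matching model: a bipartite graph with worker side `W`,
firm side `F`, edge set `E` with endpoint maps `ew`, `ef`, integer capacities `b`,
and a choice function at every vertex (acting on vectors `E → ℕ`, only the
coordinates on edges incident to the vertex being relevant). -/
structure Model (W F E : Type*) where
  ew : E → W
  ef : E → F
  b : E → ℕ
  Cw : W → (E → ℕ) → (E → ℕ)
  Cf : F → (E → ℕ) → (E → ℕ)

/-- An edge-simple closed alternating sequence `(a 0, c 0, a 1, c 1, …)`;
the data of a candidate rotation. -/
structure Cyc (E : Type*) where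
  k : ℕ
  hk : 0 < k
  a : Fin k → E
  c : Fin k → E

/-- Cyclically next index. -/
def Cyc.nxt {E : Type*} (R : Cyc E) (i : Fin R.k) : Fin R.k :=
  ⟨(i.1 + 1) % R.k, Nat.mod_lt _ R.hk⟩

/-- Two cycles are the same (as cyclic sequences) if they differ by a cyclic
shift of the indexing. -/
def Cyc.Same {E : Type*} (R R' : Cyc E) : Prop :=
  R.k = R'.k ∧ ∃ s : ℕ,
    (∀ i : Fin R.k, R'.a ⟨(i.1 + s) % R'.k, Nat.mod_lt _ R'.hk⟩ = R.a i) ∧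
    (∀ i : Fin R.k, R'.c ⟨(i.1 + s) % R'.k, Nat.mod_lt _ R'.hk⟩ = R.c i)

/-- The signed incidence vector `χ^R`: `+1` on the `a`-edges, `-1` on the `c`-edges. -/
def Cyc.chi {E : Type*} [DecidableEq E] (R : Cyc E) (e : E) : ℤ :=
  (if ∃ i, R.a i = e then 1 else 0) - (if ∃ i, R.c i = e then 1 else 0)

/-- The result `x + lam • χ^R` of shifting `x` along `R` with weight `lam`. -/
def Cyc.apply {E : Type*} [DecidableEq E] (R : Cyc E) (x : E → ℕ) (lam : ℕ) : E → ℕ :=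
  fun e => ((x e : ℤ) + (lam : ℤ) * R.chi e).toNat

variable {W F E : Type*} [Fintype E] [DecidableEq E] [DecidableEq W] [DecidableEq F]

/-- Membership in the integer box `{z : E → ℕ | z ≤ b}`. -/
def inBox (b z : E → ℕ) : Prop := ∀ e, z e ≤ b e

/-- `e` is interesting under `x` (for the choice function `C`). -/
def Interesting (b : E → ℕ) (C : (E → ℕ) → (E → ℕ)) (x : E → ℕ) (e : E) : Prop :=
  ∃ z', inBox b z' ∧ x e < z' e ∧ (∀ e', e' ≠ e → z' e' = x e') ∧ x e < C z' e

/-- `C` is a choice function for the coordinates `inc` (the star of a vertex),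
obeying (A1) consistency, (A2) substitutability, (A3) size monotonicity;
it acts as the identity outside `inc` and depends only on the `inc`-coordinates. -/
structure IsCF (b : E → ℕ) (inc : E → Prop) [DecidablePred inc]
    (C : (E → ℕ) → (E → ℕ)) : Prop where
  le : ∀ z, inBox b z → C z ≤ z
  offId : ∀ z e, ¬ inc e → C z e = z e
  localDep : ∀ z z' : E → ℕ, (∀ e, inc e → z e = z' e) → ∀ e, inc e → C z e = C z' e
  a1 : ∀ z z' : E → ℕ, inBox b z → z' ≤ z → C z ≤ z' → C z' = C z
  a2 : ∀ z z' : E → ℕ, inBox b z → z' ≤ z → C z ⊓ z' ≤ C z'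
  a3 : ∀ z z' : E → ℕ, inBox b z → z' ≤ z →
    ∑ e ∈ Finset.univ.filter inc, C z' e ≤ ∑ e ∈ Finset.univ.filter inc, C z e

/-- `e` is incident to worker `w`. -/
def Model.incW (M : Model W F E) (w : W) (e : E) : Prop := M.ew e = w

/-- `e` is incident to firm `f`. -/
def Model.incF (M : Model W F E) (f : F) (e : E) : Prop := M.ef e = f

instance (M : Model W F E) (w : W) : DecidablePred (M.incW w) :=
  fun e => inferInstanceAs (Decidable (M.ew e = w))

instance (M : Model W F E) (f : F) : DecidablePred (M.incF f) :=
  fun e => inferInstanceAs (Decidable (M.ef e = f))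

/-- All choice functions of the model satisfy the axioms. -/
structure Model.Valid (M : Model W F E) : Prop where
  cfW : ∀ w : W, IsCF M.b (M.incW w) (M.Cw w)
  cfF : ∀ f : F, IsCF M.b (M.incF f) (M.Cf f)

/-- `x` is a g-matching: it lies in the box and is acceptable for every vertex. -/
def Model.IsGM (M : Model W F E) (x : E → ℕ) : Prop :=
  inBox M.b x ∧ (∀ w, M.Cw w x = x) ∧ (∀ f, M.Cf f x = x)

/-- `e` is interesting for the worker `w` under `x`. -/
def Model.IntW (M : Model W F E) (w : W) (x : E → ℕ) (e : E) : Prop :=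
  Interesting M.b (M.Cw w) x e

/-- `e` is interesting for the firm `f` under `x`. -/
def Model.IntF (M : Model W F E) (f : F) (x : E → ℕ) (e : E) : Prop :=
  Interesting M.b (M.Cf f) x e

/-- `e` blocks `x`: it is interesting for both of its endpoints. -/
def Model.Blocks (M : Model W F E) (x : E → ℕ) (e : E) : Prop :=
  M.IntW (M.ew e) x e ∧ M.IntF (M.ef e) x e

/-- `x` is a stable g-matching. -/
def Model.Stable (M : Model W F E) (x : E → ℕ) : Prop :=
  M.IsGM x ∧ ∀ e, ¬ M.Blocks x e

/-- `e ∈ U_F^+(x)`: `e` is interesting for its `F`-endpoint under `x`. -/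
def Model.UFpos (M : Model W F E) (x : E → ℕ) (e : E) : Prop :=
  M.IntF (M.ef e) x e

/-- `e ∈ U_F^-(x)`: `x e > 0` and `e` is not interesting for its `F`-endpoint under `x`. -/
def Model.UFneg (M : Model W F E) (x : E → ℕ) (e : E) : Prop :=
  0 < x e ∧ ¬ M.IntF (M.ef e) x e

/-- `(a, c)` is a legal `f`-pair under `x`: distinct edges of `E_f` with
`C_f (x + 1^a) = x + 1^a - 1^c`. -/
def Model.LegalFPair (M : Model W F E) (x : E → ℕ) (f : F) (a c : E) : Prop :=
  M.incF f a ∧ M.incF f c ∧ a ≠ c ∧ x a < M.b a ∧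
    M.Cf f (x + Pi.single a 1) + Pi.single c 1 = x + Pi.single a 1

/-- `(c, a)` is a legal `w`-pair under `x`: `c ∈ E_w ∩ U_F^-(x)`, `a ∈ E_w ∩ U_F^+(x)`,
and `x + 1^a - 1^c` is acceptable for `C_w`. -/
def Model.LegalWPair (M : Model W F E) (x : E → ℕ) (w : W) (c a : E) : Prop :=
  M.incW w c ∧ M.incW w a ∧ c ≠ a ∧ M.UFneg x c ∧ M.UFpos x a ∧
    M.Cw w (x + Pi.single a 1 - Pi.single c 1) = x + Pi.single a 1 - Pi.single c 1

/-- `(c, a)` is an essential `w`-pair under `x`: a legal `w`-pair such that no edge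
`d ∈ (U_F^+(x) ∩ E_w) - {a}` is interesting for `w` under `x + 1^a - 1^c`. -/
def Model.EssWPair (M : Model W F E) (x : E → ℕ) (w : W) (c a : E) : Prop :=
  M.LegalWPair x w c a ∧
    ∀ d, M.incW w d → M.UFpos x d → d ≠ a →
      ¬ M.IntW w (x + Pi.single a 1 - Pi.single c 1) d

/-- The preference relation `x ≺_F y` (for the firm side), on the `E_f`-coordinates. -/
def Model.PrecF (M : Model W F E) (x y : E → ℕ) : Prop :=
  x ≠ y ∧ ∀ f e, M.incF f e → M.Cf f (x ⊔ y) e = y e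

/-- `R` is a rotation applicable to `x`: an edge-simple alternating cycle whose
consecutive pairs are legal `f`-pairs and essential `w`-pairs under `x`. -/
def Model.IsRotation (M : Model W F E) (x : E → ℕ) (R : Cyc E) : Prop :=
  Function.Injective R.a ∧ Function.Injective R.c ∧ (∀ i j, R.a i ≠ R.c j) ∧
  (∀ i, M.ef (R.a i) = M.ef (R.c i) ∧
    M.LegalFPair x (M.ef (R.a i)) (R.a i) (R.c i)) ∧
  (∀ i, M.ew (R.c i) = M.ew (R.a (R.nxt i)) ∧
    M.EssWPair x (M.ew (R.c i)) (R.c i) (R.a (R.nxt i)))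

/-- `lam` is a feasible weight for `R` at `x`: every intermediate shift is stable. -/
def Model.Feasible (M : Model W F E) (x : E → ℕ) (R : Cyc E) (lam : ℕ) : Prop :=
  ∀ j, 1 ≤ j → j ≤ lam → M.Stable (R.apply x j)

/-- `t = τ_R(x)` is the maximal feasible weight for `R` at `x`. -/
def Model.IsMaxWeight (M : Model W F E) (x : E → ℕ) (R : Cyc E) (t : ℕ) : Prop :=
  1 ≤ t ∧ M.Feasible x R t ∧ ∀ t', M.Feasible x R t' → t' ≤ t

/-- A route: a sequence of stable g-matchings, each obtained from the previous one
by shifting along an applicable rotation with a feasible positive weight. -/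
structure Route (M : Model W F E) where
  N : ℕ
  xs : ℕ → E → ℕ
  rot : ℕ → Cyc E
  lam : ℕ → ℕ
  stable0 : M.Stable (xs 0)
  isrot : ∀ i < N, M.IsRotation (xs i) (rot i)
  lam_pos : ∀ i < N, 1 ≤ lam i
  feas : ∀ i < N, M.Feasible (xs i) (rot i) (lam i)
  step : ∀ i < N, xs (i + 1) = (rot i).apply (xs i) (lam i)

/-- A route is non-excessive: if the same rotation (as a cycle) is used twice, the
earlier occurrence is used with its maximal feasible weight. -/
def Route.NonExcessive {M : Model W F E} (T : Route M) : Prop :=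
  ∀ i j, i < j → j < T.N → (T.rot i).Same (T.rot j) →
    M.IsMaxWeight (T.xs i) (T.rot i) (T.lam i)

/-- A route is principal: every rotation is applied with its maximal feasible weight. -/
def Route.Principal {M : Model W F E} (T : Route M) : Prop :=
  ∀ i < T.N, M.IsMaxWeight (T.xs i) (T.rot i) (T.lam i)

open scoped Classical in
/-- The number of steps of the route using the rotation `R` (as a cycle) with weight `l`. -/
noncomputable def Route.count {M : Model W F E} (T : Route M) (R : Cyc E) (l : ℕ) : ℕ :=
  ((Finset.range T.N).filter (fun i => (T.rot i).Same R ∧ T.lam i = l)).card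



section Aux

set_option linter.unusedSectionVars false

variable {E : Type*} [Fintype E] [DecidableEq E]
variable {b : E → ℕ} {inc : E → Prop} [DecidablePred inc] {C : (E → ℕ) → (E → ℕ)}

lemma inBox_mono {u m : E → ℕ} (hum : u ≤ m) (hm : inBox b m) : inBox b u :=
  fun e => (hum e).trans (hm e)

/-- If `e` is not interesting under an acceptable `v`, then `C (v + 1^e) = v`. -/
lemma notInt_step (cf : IsCF b inc C) {v : E → ℕ} (hv : C v = v) {e : E}
    (hbox : inBox b (v + Pi.single e 1)) (hni : ¬ Interesting b C v e) :
    C (v + Pi.single e 1) = v := by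
  set u := v + Pi.single e 1 with hu
  have hue : v e < u e := by simp [hu, Pi.single_apply]
  have hother : ∀ e', e' ≠ e → u e' = v e' := by
    intro e' h; simp [hu, Pi.single_apply, h]
  have h1 : C u e ≤ v e := by
    by_contra h
    push_neg at h
    exact hni ⟨u, hbox, hue, hother, h⟩
  have hvu : v ≤ u := by
    intro e'
    by_cases h : e' = e
    · subst h; exact hue.le
    · exact (hother e' h).ge
  have hCle : C u ≤ v := by
    intro e'
    by_cases h : e' = e
    · subst h; exact h1
    · exact (cf.le u hbox e').trans (hother e' h).le
  have := cf.a1 u v hbox hvu hCle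
  rw [hv] at this; exact this.symm

/-- If `e1, e2` are not interesting under acceptable `v`, then `C (v + 1^{e1} + 1^{e2}) = v`. -/
lemma notInt_step2 (cf : IsCF b inc C) {v : E → ℕ} (hv : C v = v) {e1 e2 : E}
    (hbox : inBox b (v + Pi.single e1 1 + Pi.single e2 1))
    (h1 : ¬ Interesting b C v e1) (h2 : ¬ Interesting b C v e2) :
    C (v + Pi.single e1 1 + Pi.single e2 1) = v := by
  set m := v + Pi.single e1 1 + Pi.single e2 1 with hm
  have hle1 : v + Pi.single e1 1 ≤ m := by
    intro e; simp only [hm, Pi.add_apply, Pi.single_apply]; omega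
  have hle2 : v + Pi.single e2 1 ≤ m := by
    intro e; simp only [hm, Pi.add_apply, Pi.single_apply]; omega
  have hb1 : inBox b (v + Pi.single e1 1) := inBox_mono hle1 hbox
  have hb2 : inBox b (v + Pi.single e2 1) := inBox_mono hle2 hbox
  have hc1 : C (v + Pi.single e1 1) = v := notInt_step cf hv hb1 h1
  have hc2 : C (v + Pi.single e2 1) = v := notInt_step cf hv hb2 h2
  have ha1 := cf.a2 m (v + Pi.single e1 1) hbox hle1
  have ha2 := cf.a2 m (v + Pi.single e2 1) hbox hle2
  rw [hc1] at ha1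
  rw [hc2] at ha2
  have hvm : v ≤ m := by
    intro e; simp only [hm, Pi.add_apply, Pi.single_apply]; omega
  have hCle : C m ≤ v := by
    intro e
    by_cases he1 : e = e1
    · have h := ha1 e
      simp only [Pi.inf_apply, Pi.add_apply, Pi.single_apply, if_pos he1] at h
      rcases inf_le_iff.mp h with h' | h'
      · exact h'
      · omega
    · by_cases he2 : e = e2
      · have h := ha2 e
        simp only [Pi.inf_apply, Pi.add_apply, Pi.single_apply, if_pos he2] at h
        rcases inf_le_iff.mp h with h' | h'
        · exact h'
        · omega
      · have := cf.le m hbox e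
        simp only [hm, Pi.add_apply, Pi.single_apply, if_neg he1, if_neg he2] at this ⊢
        omega
  have := cf.a1 m v hbox hvm hCle
  rw [hv] at this; exact this.symm

/-- Canonical witness for interestingness. -/
lemma int_one (cf : IsCF b inc C) {y : E → ℕ} {d : E} (h : Interesting b C y d) :
    y d < b d ∧ y d < C (y + Pi.single d 1) d := by
  obtain ⟨u, hub, hlt, hoff, hch⟩ := h
  refine ⟨hlt.trans_le (hub d), ?_⟩
  have hle : y + Pi.single d 1 ≤ u := by
    intro e
    by_cases he : e = d
    · subst he; simp [Pi.single_apply]; omega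
    · simp [Pi.single_apply, he, (hoff e he).ge]
  have h := cf.a2 u (y + Pi.single d 1) hub hle d
  have hyd : (y + Pi.single d 1 : E → ℕ) d = y d + 1 := by simp
  simp only [Pi.inf_apply, hyd] at h
  rcases inf_le_iff.mp h with h' | h'
  · exact lt_of_lt_of_le hch h'
  · omega

lemma sum_single_mem (s : Finset E) {e : E} (he : e ∈ s) :
    ∑ x ∈ s, Pi.single e (1 : ℕ) x = 1 := by
  simp only [Pi.single_apply]
  rw [Finset.sum_ite_eq' s e (fun _ => (1 : ℕ))]
  simp [he]

/-- The size-monotonicity contradiction. -/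
lemma sum_contra (cf : IsCF b inc C) {v m u : E → ℕ}
    (hm : inBox b m) (hCm : C m = v) (hum : u ≤ m)
    (hCu : ∀ e, u e ≤ C u e) {e1 cc d : E}
    (he1 : inc e1) (hcc : inc cc) (hd : inc d)
    (hpt : ∀ e, v e + (Pi.single e1 1 : E → ℕ) e ≤ u e + (Pi.single cc 1 : E → ℕ) e)
    (hstrict : v d + (Pi.single e1 1 : E → ℕ) d < u d + (Pi.single cc 1 : E → ℕ) d) : False := by
  classical
  set s := Finset.univ.filter inc with hs
  have hds : d ∈ s := Finset.mem_filter.2 ⟨Finset.mem_univ _, hd⟩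
  have h3 : ∑ e ∈ s, C u e ≤ ∑ e ∈ s, C m e := cf.a3 m u hm hum
  rw [hCm] at h3
  have h4 : ∑ e ∈ s, u e ≤ ∑ e ∈ s, C u e :=
    Finset.sum_le_sum (fun e _ => hCu e)
  have h5 : ∑ e ∈ s, (v e + (Pi.single e1 1 : E → ℕ) e) < ∑ e ∈ s, (u e + (Pi.single cc 1 : E → ℕ) e) :=
    Finset.sum_lt_sum (fun e _ => hpt e) ⟨d, hds, hstrict⟩
  rw [Finset.sum_add_distrib, Finset.sum_add_distrib,
    sum_single_mem s (Finset.mem_filter.2 ⟨Finset.mem_univ _, he1⟩),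
    sum_single_mem s (Finset.mem_filter.2 ⟨Finset.mem_univ _, hcc⟩)] at h5
  omega

lemma ind_pair {E : Type*} [DecidableEq E] {p q : E} (h : p ≠ q) (e : E) :
    (if e = p then (1:ℕ) else 0) + (if e = q then 1 else 0) ≤ 1 := by
  by_cases h1 : e = p
  · subst h1; rw [if_pos rfl, if_neg h]
  · rw [if_neg h1]; split <;> omega

lemma ind_le {E : Type*} [DecidableEq E] {x : E → ℕ} {p : E} (h : 1 ≤ x p) (e : E) :
    (if e = p then (1:ℕ) else 0) ≤ x e := by
  by_cases h1 : e = p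
  · subst h1; rw [if_pos rfl]; exact h
  · rw [if_neg h1]; omega

lemma ind_le2 {E : Type*} [DecidableEq E] {x : E → ℕ} {p q : E} (hpq : p ≠ q)
    (hp : 1 ≤ x p) (hq : 1 ≤ x q) (e : E) :
    (if e = p then (1:ℕ) else 0) + (if e = q then 1 else 0) ≤ x e := by
  by_cases h1 : e = p
  · subst h1; rw [if_pos rfl, if_neg hpq]; omega
  · rw [if_neg h1]
    by_cases h2 : e = q
    · subst h2; rw [if_pos rfl]; omega
    · rw [if_neg h2]; omega

end Aux

/-- Lemma 3.7: for disjoint essential `w`-pairs `(c, a)` and `(c', a')` under a stable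
`x`, with `y := x + 1^a + 1^{a'} - 1^c - 1^{c'}`: (i) `y` is acceptable for `C_w`;
(ii) no edge of `U_F^+(x) ∩ E_w` is interesting for `w` under `y`; (iii) `(c', a')`
remains essential under `z := x + 1^a - 1^c`, and `(c, a)` remains essential under
`z' := x + 1^{a'} - 1^{c'}`. -/
theorem statement7 (M : Model W F E) (hM : M.Valid)
    (x : E → ℕ) (hx : M.Stable x) (w : W) (c a c' a' : E)
    (h1 : M.EssWPair x w c a) (h2 : M.EssWPair x w c' a')
    (hcc : c ≠ c') (hca : c ≠ a') (hac : a ≠ c') (haa : a ≠ a') :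
    (M.Cw w (x + Pi.single a 1 + Pi.single a' 1 - Pi.single c 1 - Pi.single c' 1)
        = x + Pi.single a 1 + Pi.single a' 1 - Pi.single c 1 - Pi.single c' 1) ∧
    (∀ d, M.incW w d → M.UFpos x d →
        ¬ M.IntW w (x + Pi.single a 1 + Pi.single a' 1 - Pi.single c 1 - Pi.single c' 1) d) ∧
    ((M.Cw w ((x + Pi.single a 1 - Pi.single c 1) + Pi.single a' 1 - Pi.single c' 1)
        = (x + Pi.single a 1 - Pi.single c 1) + Pi.single a' 1 - Pi.single c' 1) ∧
      (∀ d, M.incW w d → M.UFpos x d → d ≠ a' →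
        ¬ M.IntW w ((x + Pi.single a 1 - Pi.single c 1) + Pi.single a' 1 - Pi.single c' 1) d)) ∧
    ((M.Cw w ((x + Pi.single a' 1 - Pi.single c' 1) + Pi.single a 1 - Pi.single c 1)
        = (x + Pi.single a' 1 - Pi.single c' 1) + Pi.single a 1 - Pi.single c 1) ∧
      (∀ d, M.incW w d → M.UFpos x d → d ≠ a →
        ¬ M.IntW w ((x + Pi.single a' 1 - Pi.single c' 1) + Pi.single a 1 - Pi.single c 1) d)) := by
  classical
  obtain ⟨⟨hxbox, hxw, hxf⟩, hnoblock⟩ := hx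
  obtain ⟨⟨hcI, haI, hca1, hcneg, hapos, hz⟩, hess1⟩ := h1
  obtain ⟨⟨hc'I, ha'I, hc'a'1, hc'neg, ha'pos, hz'⟩, hess2⟩ := h2
  have cf : IsCF M.b (M.incW w) (M.Cw w) := hM.cfW w
  have hxc : 1 ≤ x c := hcneg.1
  have hxc' : 1 ≤ x c' := hc'neg.1
  have hba : x a < M.b a := by
    obtain ⟨u0, hub, hlt, -, -⟩ := hapos
    exact hlt.trans_le (hub a)
  have hba' : x a' < M.b a' := by
    obtain ⟨u0, hub, hlt, -, -⟩ := ha'pos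
    exact hlt.trans_le (hub a')
  have haa' : a' ≠ a := Ne.symm haa
  have hacn : a ≠ c := Ne.symm hca1
  have ha'cn : a' ≠ c := Ne.symm hca
  have ha'c'n : a' ≠ c' := Ne.symm hc'a'1
  set Y := x + Pi.single a 1 + Pi.single a' 1 - Pi.single c 1 - Pi.single c' 1 with hY
  set Z := x + Pi.single a 1 - Pi.single c 1 with hZ
  set Z' := x + Pi.single a' 1 - Pi.single c' 1 with hZ'
  have hbb : ∀ e, x e + (if e = a then (1:ℕ) else 0) + (if e = a' then 1 else 0) ≤ M.b e := by
    intro e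
    by_cases h1 : e = a
    · subst h1; rw [if_pos rfl, if_neg haa]; omega
    · rw [if_neg h1]
      by_cases h2 : e = a'
      · subst h2; rw [if_pos rfl]; have := hba'; omega
      · rw [if_neg h2]; have := hxbox e; omega
  -- part (i)
  have hqbox : inBox M.b (Z + Pi.single a' 1) := by
    intro e
    simp only [hY, hZ, hZ', Pi.add_apply, Pi.sub_apply, Pi.single_apply, eq_self_iff_true, if_true]
    have f1 := ind_pair haa e
    have f2 := ind_pair hacn e
    have f3 := ind_pair hac e
    have f4 := ind_pair ha'cn e
    have f5 := ind_pair ha'c'n e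
    have f6 := ind_pair hcc e
    have g1 := ind_le hxc e
    have g2 := ind_le hxc' e
    have g3 := ind_le2 hcc hxc hxc' e
    have hb0 := hbb e
    have hbx0 := hxbox e
    omega
  have hpbox : inBox M.b (Z' + Pi.single a 1) := by
    intro e
    simp only [hY, hZ, hZ', Pi.add_apply, Pi.sub_apply, Pi.single_apply, eq_self_iff_true, if_true]
    have f1 := ind_pair haa e
    have f2 := ind_pair hacn e
    have f3 := ind_pair hac e
    have f4 := ind_pair ha'cn e
    have f5 := ind_pair ha'c'n e
    have f6 := ind_pair hcc e
    have g1 := ind_le hxc e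
    have g2 := ind_le hxc' e
    have g3 := ind_le2 hcc hxc hxc' e
    have hb0 := hbb e
    have hbx0 := hxbox e
    omega
  have hq : M.Cw w (Z + Pi.single a' 1) = Z :=
    notInt_step cf hz hqbox (hess1 a' ha'I ha'pos haa')
  have hp : M.Cw w (Z' + Pi.single a 1) = Z' :=
    notInt_step cf hz' hpbox (hess2 a haI hapos haa)
  have hYbox : inBox M.b Y := by
    intro e
    simp only [hY, hZ, hZ', Pi.add_apply, Pi.sub_apply, Pi.single_apply, eq_self_iff_true, if_true]
    have f1 := ind_pair haa e
    have f2 := ind_pair hacn e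
    have f3 := ind_pair hac e
    have f4 := ind_pair ha'cn e
    have f5 := ind_pair ha'c'n e
    have f6 := ind_pair hcc e
    have g1 := ind_le hxc e
    have g2 := ind_le hxc' e
    have g3 := ind_le2 hcc hxc hxc' e
    have hb0 := hbb e
    have hbx0 := hxbox e
    omega
  have hYlep : Y ≤ Z' + Pi.single a 1 := by
    intro e
    simp only [hY, hZ, hZ', Pi.add_apply, Pi.sub_apply, Pi.single_apply, eq_self_iff_true, if_true]
    have f1 := ind_pair haa e
    have f2 := ind_pair hacn e
    have f3 := ind_pair hac e
    have f4 := ind_pair ha'cn e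
    have f5 := ind_pair ha'c'n e
    have f6 := ind_pair hcc e
    have g1 := ind_le hxc e
    have g2 := ind_le hxc' e
    have g3 := ind_le2 hcc hxc hxc' e
    have hb0 := hbb e
    have hbx0 := hxbox e
    omega
  have hYleq : Y ≤ Z + Pi.single a' 1 := by
    intro e
    simp only [hY, hZ, hZ', Pi.add_apply, Pi.sub_apply, Pi.single_apply, eq_self_iff_true, if_true]
    have f1 := ind_pair haa e
    have f2 := ind_pair hacn e
    have f3 := ind_pair hac e
    have f4 := ind_pair ha'cn e
    have f5 := ind_pair ha'c'n e
    have f6 := ind_pair hcc e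
    have g1 := ind_le hxc e
    have g2 := ind_le hxc' e
    have g3 := ind_le2 hcc hxc hxc' e
    have hb0 := hbb e
    have hbx0 := hxbox e
    omega
  have h2a := cf.a2 _ Y hpbox hYlep
  rw [hp] at h2a
  have h2b := cf.a2 _ Y hqbox hYleq
  rw [hq] at h2b
  have hCY : M.Cw w Y = Y := by
    refine le_antisymm (cf.le Y hYbox) ?_
    intro e
    by_cases hea : e = a
    · have hge : Y e ≤ Z e := by
        simp only [hY, hZ, hZ', Pi.add_apply, Pi.sub_apply, Pi.single_apply, eq_self_iff_true, if_true]
        have e1 : (if e = a then (1:ℕ) else 0) = 1 := if_pos hea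
        have e2 : (if e = a' then (1:ℕ) else 0) = 0 := if_neg (fun h => haa (hea.symm.trans h))
        have e3 : (if e = c then (1:ℕ) else 0) = 0 := if_neg (fun h => hacn (hea.symm.trans h))
        have e4 : (if e = c' then (1:ℕ) else 0) = 0 := if_neg (fun h => hac (hea.symm.trans h))
        omega
      exact (le_inf hge le_rfl).trans (h2b e)
    · have hge : Y e ≤ Z' e := by
        simp only [hY, hZ, hZ', Pi.add_apply, Pi.sub_apply, Pi.single_apply, eq_self_iff_true, if_true]
        have e1 : (if e = a then (1:ℕ) else 0) = 0 := if_neg hea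
        have f1 := ind_pair haa e
        have f2 := ind_pair hacn e
        have f3 := ind_pair hac e
        have f4 := ind_pair ha'cn e
        have f5 := ind_pair ha'c'n e
        have f6 := ind_pair hcc e
        have g1 := ind_le hxc e
        have g2 := ind_le hxc' e
        have g3 := ind_le2 hcc hxc hxc' e
        have hb0 := hbb e
        have hbx0 := hxbox e
        omega
      exact (le_inf hge le_rfl).trans (h2a e)
  -- part (ii)
  have hUF : ∀ d, M.incW w d → M.UFpos x d → ¬ M.IntW w Y d := by
    intro d hdI hdpos hint
    have hdc : d ≠ c := by rintro rfl; exact hcneg.2 hdpos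
    have hdc' : d ≠ c' := by rintro rfl; exact hc'neg.2 hdpos
    obtain ⟨hdb, hdch⟩ := int_one cf hint
    by_cases hda' : d = a'
    · rw [hda'] at hdb hdch
      have hniA' : ¬ M.IntW w Z a' := hess1 a' ha'I ha'pos haa'
      have hYa' : Y a' = x a' + 1 := by
        simp only [hY, hZ, hZ', Pi.add_apply, Pi.sub_apply, Pi.single_apply, eq_self_iff_true, if_true]
        have e1 : (if a' = a then (1:ℕ) else 0) = 0 := if_neg haa'
        have e2 : (if a' = c then (1:ℕ) else 0) = 0 := if_neg ha'cn
        have e3 : (if a' = c' then (1:ℕ) else 0) = 0 := if_neg ha'c'n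
        omega
      have hmbox : inBox M.b (Z + Pi.single a' 1 + Pi.single a' 1) := by
        intro e
        simp only [hY, hZ, hZ', Pi.add_apply, Pi.sub_apply, Pi.single_apply, eq_self_iff_true, if_true]
        by_cases h2 : e = a'
        · have h3 : x a' + 1 < M.b a' := by rw [← hYa']; exact hdb
          rw [h2]
          have e0 : (if a' = a' then (1:ℕ) else 0) = 1 := if_pos rfl
          have e1 : (if a' = a then (1:ℕ) else 0) = 0 := if_neg haa'
          have e2 : (if a' = c then (1:ℕ) else 0) = 0 := if_neg ha'cn
          have e3 : (if a' = c' then (1:ℕ) else 0) = 0 := if_neg ha'c'n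
          omega
        · rw [if_neg h2]
          have f1 := ind_pair haa e
          have f2 := ind_pair hacn e
          have f3 := ind_pair hac e
          have f4 := ind_pair ha'cn e
          have f5 := ind_pair ha'c'n e
          have f6 := ind_pair hcc e
          have g1 := ind_le hxc e
          have g2 := ind_le hxc' e
          have g3 := ind_le2 hcc hxc hxc' e
          have hb0 := hbb e
          have hbx0 := hxbox e
          omega
      have hCm : M.Cw w (Z + Pi.single a' 1 + Pi.single a' 1) = Z :=
        notInt_step2 cf hz hmbox hniA' hniA'
      set u := Y + Pi.single a' 1 with hu
      have hum : u ≤ Z + Pi.single a' 1 + Pi.single a' 1 := by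
        intro e
        simp only [hu, hY, hZ, hZ', Pi.add_apply, Pi.sub_apply, Pi.single_apply, eq_self_iff_true, if_true]
        have f1 := ind_pair haa e
        have f2 := ind_pair hacn e
        have f3 := ind_pair hac e
        have f4 := ind_pair ha'cn e
        have f5 := ind_pair ha'c'n e
        have f6 := ind_pair hcc e
        have g1 := ind_le hxc e
        have g2 := ind_le hxc' e
        have g3 := ind_le2 hcc hxc hxc' e
        have hb0 := hbb e
        have hbx0 := hxbox e
        omega
      have h2m := cf.a2 _ u hmbox hum
      rw [hCm] at h2m
      have hCuAll : ∀ e, u e ≤ M.Cw w u e := by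
        intro e
        by_cases hea : e = a'
        · rw [hea]
          have hval : u a' = Y a' + 1 := by simp [hu]
          omega
        · have hge : u e ≤ Z e := by
            simp only [hu, hY, hZ, hZ', Pi.add_apply, Pi.sub_apply, Pi.single_apply, eq_self_iff_true, if_true]
            have e1 : (if e = a' then (1:ℕ) else 0) = 0 := if_neg hea
            have f1 := ind_pair haa e
            have f2 := ind_pair hacn e
            have f3 := ind_pair hac e
            have f4 := ind_pair ha'cn e
            have f5 := ind_pair ha'c'n e
            have f6 := ind_pair hcc e
            have g1 := ind_le hxc e
            have g2 := ind_le hxc' e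
            have g3 := ind_le2 hcc hxc hxc' e
            have hb0 := hbb e
            have hbx0 := hxbox e
            omega
          exact (le_inf hge le_rfl).trans (h2m e)
      apply sum_contra cf hmbox hCm hum hCuAll ha'I hc'I ha'I
      · intro e
        simp only [hu, hY, hZ, hZ', Pi.add_apply, Pi.sub_apply, Pi.single_apply, eq_self_iff_true, if_true]
        have f1 := ind_pair haa e
        have f2 := ind_pair hacn e
        have f3 := ind_pair hac e
        have f4 := ind_pair ha'cn e
        have f5 := ind_pair ha'c'n e
        have f6 := ind_pair hcc e
        have g1 := ind_le hxc e
        have g2 := ind_le hxc' e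
        have g3 := ind_le2 hcc hxc hxc' e
        have hb0 := hbb e
        have hbx0 := hxbox e
        omega
      · simp only [hu, hY, hZ, hZ', Pi.add_apply, Pi.sub_apply, Pi.single_apply, eq_self_iff_true, if_true]
        have e1 : (if a' = a then (1:ℕ) else 0) = 0 := if_neg haa'
        have e2 : (if a' = a' then (1:ℕ) else 0) = 1 := if_pos rfl
        have e3 : (if a' = c then (1:ℕ) else 0) = 0 := if_neg ha'cn
        have e4 : (if a' = c' then (1:ℕ) else 0) = 0 := if_neg ha'c'n
        omega
    · by_cases hda : d = a
      · rw [hda] at hdb hdch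
        have hniA : ¬ M.IntW w Z' a := hess2 a haI hapos haa
        have hYa : Y a = x a + 1 := by
          simp only [hY, hZ, hZ', Pi.add_apply, Pi.sub_apply, Pi.single_apply, eq_self_iff_true, if_true]
          have e1 : (if a = a' then (1:ℕ) else 0) = 0 := if_neg haa
          have e2 : (if a = c then (1:ℕ) else 0) = 0 := if_neg hacn
          have e3 : (if a = c' then (1:ℕ) else 0) = 0 := if_neg hac
          omega
        have hmbox : inBox M.b (Z' + Pi.single a 1 + Pi.single a 1) := by
          intro e
          simp only [hY, hZ, hZ', Pi.add_apply, Pi.sub_apply, Pi.single_apply, eq_self_iff_true, if_true]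
          by_cases h2 : e = a
          · have h3 : x a + 1 < M.b a := by rw [← hYa]; exact hdb
            rw [h2]
            have e0 : (if a = a then (1:ℕ) else 0) = 1 := if_pos rfl
            have e1 : (if a = a' then (1:ℕ) else 0) = 0 := if_neg haa
            have e2 : (if a = c then (1:ℕ) else 0) = 0 := if_neg hacn
            have e3 : (if a = c' then (1:ℕ) else 0) = 0 := if_neg hac
            omega
          · rw [if_neg h2]
            have f1 := ind_pair haa e
            have f2 := ind_pair hacn e
            have f3 := ind_pair hac e
            have f4 := ind_pair ha'cn e
            have f5 := ind_pair ha'c'n e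
            have f6 := ind_pair hcc e
            have g1 := ind_le hxc e
            have g2 := ind_le hxc' e
            have g3 := ind_le2 hcc hxc hxc' e
            have hb0 := hbb e
            have hbx0 := hxbox e
            omega
        have hCm : M.Cw w (Z' + Pi.single a 1 + Pi.single a 1) = Z' :=
          notInt_step2 cf hz' hmbox hniA hniA
        set u := Y + Pi.single a 1 with hu
        have hum : u ≤ Z' + Pi.single a 1 + Pi.single a 1 := by
          intro e
          simp only [hu, hY, hZ, hZ', Pi.add_apply, Pi.sub_apply, Pi.single_apply, eq_self_iff_true, if_true]
          have f1 := ind_pair haa e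
          have f2 := ind_pair hacn e
          have f3 := ind_pair hac e
          have f4 := ind_pair ha'cn e
          have f5 := ind_pair ha'c'n e
          have f6 := ind_pair hcc e
          have g1 := ind_le hxc e
          have g2 := ind_le hxc' e
          have g3 := ind_le2 hcc hxc hxc' e
          have hb0 := hbb e
          have hbx0 := hxbox e
          omega
        have h2m := cf.a2 _ u hmbox hum
        rw [hCm] at h2m
        have hCuAll : ∀ e, u e ≤ M.Cw w u e := by
          intro e
          by_cases hea : e = a
          · rw [hea]
            have hval : u a = Y a + 1 := by simp [hu]
            omega
          · have hge : u e ≤ Z' e := by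
              simp only [hu, hY, hZ, hZ', Pi.add_apply, Pi.sub_apply, Pi.single_apply, eq_self_iff_true, if_true]
              have e1 : (if e = a then (1:ℕ) else 0) = 0 := if_neg hea
              have f1 := ind_pair haa e
              have f2 := ind_pair hacn e
              have f3 := ind_pair hac e
              have f4 := ind_pair ha'cn e
              have f5 := ind_pair ha'c'n e
              have f6 := ind_pair hcc e
              have g1 := ind_le hxc e
              have g2 := ind_le hxc' e
              have g3 := ind_le2 hcc hxc hxc' e
              have hb0 := hbb e
              have hbx0 := hxbox e
              omega
            exact (le_inf hge le_rfl).trans (h2m e)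
        apply sum_contra cf hmbox hCm hum hCuAll haI hcI haI
        · intro e
          simp only [hu, hY, hZ, hZ', Pi.add_apply, Pi.sub_apply, Pi.single_apply, eq_self_iff_true, if_true]
          have f1 := ind_pair haa e
          have f2 := ind_pair hacn e
          have f3 := ind_pair hac e
          have f4 := ind_pair ha'cn e
          have f5 := ind_pair ha'c'n e
          have f6 := ind_pair hcc e
          have g1 := ind_le hxc e
          have g2 := ind_le hxc' e
          have g3 := ind_le2 hcc hxc hxc' e
          have hb0 := hbb e
          have hbx0 := hxbox e
          omega
        · simp only [hu, hY, hZ, hZ', Pi.add_apply, Pi.sub_apply, Pi.single_apply, eq_self_iff_true, if_true]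
          have e1 : (if a = a then (1:ℕ) else 0) = 1 := if_pos rfl
          have e2 : (if a = a' then (1:ℕ) else 0) = 0 := if_neg haa
          have e3 : (if a = c then (1:ℕ) else 0) = 0 := if_neg hacn
          have e4 : (if a = c' then (1:ℕ) else 0) = 0 := if_neg hac
          omega
      · have hniA : ¬ M.IntW w Z' a := hess2 a haI hapos haa
        have hniD' : ¬ M.IntW w Z' d := hess2 d hdI hdpos hda'
        have hniA' : ¬ M.IntW w Z a' := hess1 a' ha'I ha'pos haa'
        have hniD : ¬ M.IntW w Z d := hess1 d hdI hdpos hda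
        have hYd : Y d = x d := by
          simp only [hY, hZ, hZ', Pi.add_apply, Pi.sub_apply, Pi.single_apply, eq_self_iff_true, if_true]
          have e1 : (if d = a then (1:ℕ) else 0) = 0 := if_neg hda
          have e2 : (if d = a' then (1:ℕ) else 0) = 0 := if_neg hda'
          have e3 : (if d = c then (1:ℕ) else 0) = 0 := if_neg hdc
          have e4 : (if d = c' then (1:ℕ) else 0) = 0 := if_neg hdc'
          omega
        have hbd : x d < M.b d := by rw [← hYd]; exact hdb
        have hm'box : inBox M.b (Z' + Pi.single a 1 + Pi.single d 1) := by
          intro e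
          simp only [hY, hZ, hZ', Pi.add_apply, Pi.sub_apply, Pi.single_apply, eq_self_iff_true, if_true]
          by_cases hed : e = d
          · rw [hed]
            have e0 : (if d = d then (1:ℕ) else 0) = 1 := if_pos rfl
            have e1 : (if d = a then (1:ℕ) else 0) = 0 := if_neg hda
            have e2 : (if d = a' then (1:ℕ) else 0) = 0 := if_neg hda'
            have e3 : (if d = c then (1:ℕ) else 0) = 0 := if_neg hdc
            have e4 : (if d = c' then (1:ℕ) else 0) = 0 := if_neg hdc'
            omega
          · rw [if_neg hed]
            have f1 := ind_pair haa e
            have f2 := ind_pair hacn e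
            have f3 := ind_pair hac e
            have f4 := ind_pair ha'cn e
            have f5 := ind_pair ha'c'n e
            have f6 := ind_pair hcc e
            have g1 := ind_le hxc e
            have g2 := ind_le hxc' e
            have g3 := ind_le2 hcc hxc hxc' e
            have hb0 := hbb e
            have hbx0 := hxbox e
            omega
        have hmbox : inBox M.b (Z + Pi.single a' 1 + Pi.single d 1) := by
          intro e
          simp only [hY, hZ, hZ', Pi.add_apply, Pi.sub_apply, Pi.single_apply, eq_self_iff_true, if_true]
          by_cases hed : e = d
          · rw [hed]
            have e0 : (if d = d then (1:ℕ) else 0) = 1 := if_pos rfl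
            have e1 : (if d = a then (1:ℕ) else 0) = 0 := if_neg hda
            have e2 : (if d = a' then (1:ℕ) else 0) = 0 := if_neg hda'
            have e3 : (if d = c then (1:ℕ) else 0) = 0 := if_neg hdc
            have e4 : (if d = c' then (1:ℕ) else 0) = 0 := if_neg hdc'
            omega
          · rw [if_neg hed]
            have f1 := ind_pair haa e
            have f2 := ind_pair hacn e
            have f3 := ind_pair hac e
            have f4 := ind_pair ha'cn e
            have f5 := ind_pair ha'c'n e
            have f6 := ind_pair hcc e
            have g1 := ind_le hxc e
            have g2 := ind_le hxc' e
            have g3 := ind_le2 hcc hxc hxc' e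
            have hb0 := hbb e
            have hbx0 := hxbox e
            omega
        have hCm' : M.Cw w (Z' + Pi.single a 1 + Pi.single d 1) = Z' :=
          notInt_step2 cf hz' hm'box hniA hniD'
        have hCm : M.Cw w (Z + Pi.single a' 1 + Pi.single d 1) = Z :=
          notInt_step2 cf hz hmbox hniA' hniD
        set u := Y + Pi.single d 1 with hu
        have hum' : u ≤ Z' + Pi.single a 1 + Pi.single d 1 := by
          intro e
          simp only [hu, hY, hZ, hZ', Pi.add_apply, Pi.sub_apply, Pi.single_apply, eq_self_iff_true, if_true]
          have f1 := ind_pair haa e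
          have f2 := ind_pair hacn e
          have f3 := ind_pair hac e
          have f4 := ind_pair ha'cn e
          have f5 := ind_pair ha'c'n e
          have f6 := ind_pair hcc e
          have g1 := ind_le hxc e
          have g2 := ind_le hxc' e
          have g3 := ind_le2 hcc hxc hxc' e
          have hb0 := hbb e
          have hbx0 := hxbox e
          have fd1 := ind_pair hda e
          have fd2 := ind_pair hda' e
          have fd3 := ind_pair hdc e
          have fd4 := ind_pair hdc' e
          omega
        have hum : u ≤ Z + Pi.single a' 1 + Pi.single d 1 := by
          intro e
          simp only [hu, hY, hZ, hZ', Pi.add_apply, Pi.sub_apply, Pi.single_apply, eq_self_iff_true, if_true]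
          have f1 := ind_pair haa e
          have f2 := ind_pair hacn e
          have f3 := ind_pair hac e
          have f4 := ind_pair ha'cn e
          have f5 := ind_pair ha'c'n e
          have f6 := ind_pair hcc e
          have g1 := ind_le hxc e
          have g2 := ind_le hxc' e
          have g3 := ind_le2 hcc hxc hxc' e
          have hb0 := hbb e
          have hbx0 := hxbox e
          have fd1 := ind_pair hda e
          have fd2 := ind_pair hda' e
          have fd3 := ind_pair hdc e
          have fd4 := ind_pair hdc' e
          omega
        have h2m' := cf.a2 _ u hm'box hum'
        rw [hCm'] at h2m'
        have h2m := cf.a2 _ u hmbox hum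
        rw [hCm] at h2m
        have hud : u d = Y d + 1 := by simp [hu]
        have hCuAll : ∀ e, u e ≤ M.Cw w u e := by
          intro e
          by_cases hed : e = d
          · subst hed; omega
          · by_cases hea : e = a
            · have hge : u e ≤ Z e := by
                simp only [hu, hY, hZ, hZ', Pi.add_apply, Pi.sub_apply, Pi.single_apply, eq_self_iff_true, if_true]
                have e1 : (if e = a then (1:ℕ) else 0) = 1 := if_pos hea
                have e2 : (if e = a' then (1:ℕ) else 0) = 0 := if_neg (fun h => haa (hea.symm.trans h))
                have e3 : (if e = c then (1:ℕ) else 0) = 0 := if_neg (fun h => hacn (hea.symm.trans h))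
                have e4 : (if e = c' then (1:ℕ) else 0) = 0 := if_neg (fun h => hac (hea.symm.trans h))
                have e5 : (if e = d then (1:ℕ) else 0) = 0 := if_neg (fun h => hda (h.symm.trans hea))
                omega
              exact (le_inf hge le_rfl).trans (h2m e)
            · have hge : u e ≤ Z' e := by
                simp only [hu, hY, hZ, hZ', Pi.add_apply, Pi.sub_apply, Pi.single_apply, eq_self_iff_true, if_true]
                have e1 : (if e = a then (1:ℕ) else 0) = 0 := if_neg hea
                have e2 : (if e = d then (1:ℕ) else 0) = 0 := if_neg hed
                have f1 := ind_pair haa e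
                have f2 := ind_pair hacn e
                have f3 := ind_pair hac e
                have f4 := ind_pair ha'cn e
                have f5 := ind_pair ha'c'n e
                have f6 := ind_pair hcc e
                have g1 := ind_le hxc e
                have g2 := ind_le hxc' e
                have g3 := ind_le2 hcc hxc hxc' e
                have hb0 := hbb e
                have hbx0 := hxbox e
                omega
              exact (le_inf hge le_rfl).trans (h2m' e)
        apply sum_contra cf hm'box hCm' hum' hCuAll haI hcI hdI
        · intro e
          simp only [hu, hY, hZ, hZ', Pi.add_apply, Pi.sub_apply, Pi.single_apply, eq_self_iff_true, if_true]
          have f1 := ind_pair haa e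
          have f2 := ind_pair hacn e
          have f3 := ind_pair hac e
          have f4 := ind_pair ha'cn e
          have f5 := ind_pair ha'c'n e
          have f6 := ind_pair hcc e
          have g1 := ind_le hxc e
          have g2 := ind_le hxc' e
          have g3 := ind_le2 hcc hxc hxc' e
          have hb0 := hbb e
          have hbx0 := hxbox e
          have fd1 := ind_pair hda e
          have fd2 := ind_pair hda' e
          have fd3 := ind_pair hdc e
          have fd4 := ind_pair hdc' e
          omega
        · simp only [hu, hY, hZ, hZ', Pi.add_apply, Pi.sub_apply, Pi.single_apply, eq_self_iff_true, if_true]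
          have e1 : (if d = a then (1:ℕ) else 0) = 0 := if_neg hda
          have e2 : (if d = a' then (1:ℕ) else 0) = 0 := if_neg hda'
          have e3 : (if d = c then (1:ℕ) else 0) = 0 := if_neg hdc
          have e4 : (if d = c' then (1:ℕ) else 0) = 0 := if_neg hdc'
          have e5 : (if d = d then (1:ℕ) else 0) = 1 := if_pos rfl
          omega
  -- part (iii)
  have hE1 : Z + Pi.single a' 1 - Pi.single c' 1 = Y := by
    funext e
    simp only [hY, hZ, hZ', Pi.add_apply, Pi.sub_apply, Pi.single_apply, eq_self_iff_true, if_true]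
    have f1 := ind_pair haa e
    have f2 := ind_pair hacn e
    have f3 := ind_pair hac e
    have f4 := ind_pair ha'cn e
    have f5 := ind_pair ha'c'n e
    have f6 := ind_pair hcc e
    have g1 := ind_le hxc e
    have g2 := ind_le hxc' e
    have g3 := ind_le2 hcc hxc hxc' e
    have hb0 := hbb e
    have hbx0 := hxbox e
    omega
  have hE2 : Z' + Pi.single a 1 - Pi.single c 1 = Y := by
    funext e
    simp only [hY, hZ, hZ', Pi.add_apply, Pi.sub_apply, Pi.single_apply, eq_self_iff_true, if_true]
    have f1 := ind_pair haa e
    have f2 := ind_pair hacn e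
    have f3 := ind_pair hac e
    have f4 := ind_pair ha'cn e
    have f5 := ind_pair ha'c'n e
    have f6 := ind_pair hcc e
    have g1 := ind_le hxc e
    have g2 := ind_le hxc' e
    have g3 := ind_le2 hcc hxc hxc' e
    have hb0 := hbb e
    have hbx0 := hxbox e
    omega
  refine ⟨hCY, hUF, ⟨?_, ?_⟩, ⟨?_, ?_⟩⟩
  · rw [hE1]; exact hCY
  · intro d hdI hdpos _
    rw [hE1]; exact hUF d hdI hdpos
  · rw [hE2]; exact hCY
  · intro d hdI hdpos _
    rw [hE2]; exact hUF d hdI hdpos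


end SGMMStmt
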